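/- With the setup as in the context, take δ_j = 1/2 for all 1 ≤ j ≤ J. If ∑_{j=1}^J M_j^{(2)} < 1, then the collection A does not cover R, i.e. ⋃_{i=1}^m (a_i + I_i) ≠ R. -/

import Mathlib

open scoped Classical


private lemma core {X : Type*} [Fintype X] [Nonempty X] (J : ℕ)
    (E : ℕ → X → X → Prop) (B : ℕ → Set X) (α μ : ℕ → X → ℝ)
    (hErefl : ∀ j x, E j x x)
    (hEsymm : ∀ j x y, E j x y → E j y x)
    (hEtrans : ∀ j x y z, E j x y → E j y z → E j x z)
    (hEmono : ∀ k l, k ≤ l → ∀ x y, E l x y → E k x y)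
    (hBsat : ∀ j ∈ Finset.Icc 1 J, ∀ x y, x ∈ B j → E j x y → y ∈ B j)
    (hα : ∀ j ∈ Finset.Icc 1 J, ∀ x, α j x =
      (Nat.card ↥({y | E (j-1) x y} ∩ B j) : ℝ) / (Nat.card ↥{y | E (j-1) x y} : ℝ))
    (hμ0 : ∀ x, μ 0 x = 1 / (Nat.card X : ℝ))
    (hμ : ∀ j ∈ Finset.Icc 1 J, ∀ x, μ j x =
      if α j x < 1/2 then μ (j - 1) x * (if x ∈ B j then 0 else 1) / (1 - α j x)
      else μ (j - 1) x * (α j x - if x ∈ B j then 1/2 else 0) / (α j x * (1 - 1/2)))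
    (hsum : ∑ j ∈ Finset.Icc 1 J, ∑ x : X, α j x ^ 2 * μ (j-1) x < 1) :
    ∃ x, ∀ j ∈ Finset.Icc 1 J, x ∉ B j := by
  classical
  set C : ℕ → X → Finset X := fun l x => Finset.univ.filter (fun y => E l x y) with hC
  have hCfilter : ∀ l x, C l x = Finset.univ.filter (fun y => E l x y) := fun _ _ => rfl
  have hCmem : ∀ l x y, y ∈ C l x ↔ E l x y := by intro l x y; simp [hC]
  have hCx : ∀ l x, x ∈ C l x := fun l x => (hCmem l x x).2 (hErefl l x)
  have hCeq : ∀ l x y, E l x y → C l x = C l y := by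
    intro l x y h
    ext z
    simp only [hCmem]
    exact ⟨fun hz => hEtrans l y x z (hEsymm l x y h) hz, fun hz => hEtrans l x y z h hz⟩
  have hCpos : ∀ l x, 0 < ((C l x).card : ℝ) := by
    intro l x
    exact_mod_cast Finset.card_pos.2 ⟨x, hCx l x⟩
  have hsetFin : ∀ s : Set X, (Nat.card ↥s : ℕ) = s.toFinset.card := by
    intro s; rw [Nat.card_coe_set_eq, Set.ncard_eq_toFinset_card']
  have hαKN : ∀ j ∈ Finset.Icc 1 J, ∀ x, α j x =
      (((C (j-1) x).filter (fun y => y ∈ B j)).card : ℝ) / ((C (j-1) x).card : ℝ) := by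
    intro j hj x
    rw [hα j hj x]
    congr 2
    · rw [hsetFin]
      congr 1
      ext z
      simp [hCmem, Set.mem_toFinset]
    · rw [hsetFin]
      congr 1
      ext z
      simp [hCmem, Set.mem_toFinset]
  have hα0 : ∀ j ∈ Finset.Icc 1 J, ∀ x, 0 ≤ α j x := by
    intro j hj x; rw [hαKN j hj x]; positivity
  have hα1 : ∀ j ∈ Finset.Icc 1 J, ∀ x, α j x ≤ 1 := by
    intro j hj x
    rw [hαKN j hj x, div_le_one (hCpos _ x)]
    exact_mod_cast Finset.card_filter_le _ _
  have hαK : ∀ j ∈ Finset.Icc 1 J, ∀ x,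
      α j x * ((C (j-1) x).card : ℝ)
        = (((C (j-1) x).filter (fun y => y ∈ B j)).card : ℝ) := by
    intro j hj x
    rw [hαKN j hj x, div_mul_cancel₀]
    exact (hCpos _ x).ne'
  have hαconst : ∀ j ∈ Finset.Icc 1 J, ∀ x y, E (j-1) x y → α j x = α j y := by
    intro j hj x y h; rw [hαKN j hj x, hαKN j hj y, hCeq _ x y h]
  have hμconst : ∀ j, j ≤ J → ∀ x y, E j x y → μ j x = μ j y := by
    intro j
    induction j with
    | zero => intro _ x y _; rw [hμ0, hμ0]
    | succ j ih =>
      intro hj x y h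
      have hj1 : j + 1 ∈ Finset.Icc 1 J := by simp only [Finset.mem_Icc]; omega
      have hEj : E j x y := hEmono j (j+1) (Nat.le_succ j) x y h
      have hμp : μ j x = μ j y := ih (by omega) x y hEj
      have hαe : α (j+1) x = α (j+1) y := hαconst (j+1) hj1 x y hEj
      have hBe : (x ∈ B (j+1)) = (y ∈ B (j+1)) := by
        apply propext
        exact ⟨fun hx => hBsat (j+1) hj1 x y hx h,
               fun hy => hBsat (j+1) hj1 y x hy (hEsymm _ _ _ h)⟩
      rw [hμ (j+1) hj1 x, hμ (j+1) hj1 y]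
      simp only [Nat.add_sub_cancel, hμp, hαe, hBe]
  have hμnn : ∀ j, j ≤ J → ∀ x, 0 ≤ μ j x := by
    intro j
    induction j with
    | zero => intro _ x; rw [hμ0]; positivity
    | succ j ih =>
      intro hj x
      have hj1 : j + 1 ∈ Finset.Icc 1 J := by simp only [Finset.mem_Icc]; omega
      have hprev : 0 ≤ μ j x := ih (by omega) x
      rw [hμ (j+1) hj1 x]
      simp only [Nat.add_sub_cancel]
      by_cases hlt : α (j+1) x < 1/2
      · rw [if_pos hlt]
        have h1 : (0:ℝ) < 1 - α (j+1) x := by linarith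
        apply div_nonneg _ h1.le
        by_cases hb : x ∈ B (j+1) <;> simp [hb, hprev]
      · rw [if_neg hlt]
        push_neg at hlt
        have hαpos : (0:ℝ) < α (j+1) x := by linarith
        apply div_nonneg
        · apply mul_nonneg hprev
          by_cases hb : x ∈ B (j+1) <;> simp [hb] <;> linarith
        · nlinarith
  -- fiberwise averaging
  have lemD : ∀ l (g : X → ℝ),
      (∑ x : X, (∑ y ∈ C l x, g y) / ((C l x).card : ℝ)) = ∑ x : X, g x := by
    intro l g
    have h1 : ∀ x : X, (∑ y ∈ C l x, g y) / ((C l x).card : ℝ)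
        = ∑ y : X, if E l x y then g y / ((C l y).card : ℝ) else 0 := by
      intro x
      rw [Finset.sum_div]
      rw [show (∑ y ∈ C l x, g y / ((C l x).card : ℝ))
            = ∑ y ∈ Finset.univ.filter (fun y => E l x y), g y / ((C l x).card : ℝ) from rfl]
      rw [Finset.sum_filter]
      refine Finset.sum_congr rfl fun y _ => ?_
      by_cases h : E l x y
      · rw [if_pos h, if_pos h, hCeq l x y h]
      · rw [if_neg h, if_neg h]
    calc (∑ x : X, (∑ y ∈ C l x, g y) / ((C l x).card : ℝ))
        = ∑ x : X, ∑ y : X, if E l x y then g y / ((C l y).card : ℝ) else 0 :=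
          Finset.sum_congr rfl fun x _ => h1 x
      _ = ∑ y : X, ∑ x : X, if E l x y then g y / ((C l y).card : ℝ) else 0 :=
          Finset.sum_comm
      _ = ∑ y : X, g y := by
          refine Finset.sum_congr rfl fun y _ => ?_
          rw [← Finset.sum_filter]
          have hfe : Finset.univ.filter (fun x => E l x y) = C l y := by
            ext z
            simp only [Finset.mem_filter, Finset.mem_univ, true_and, hCmem]
            exact ⟨hEsymm l z y, hEsymm l y z⟩
          rw [hfe, Finset.sum_const, nsmul_eq_mul, mul_comm,
            div_mul_cancel₀ _ (hCpos l y).ne']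
  -- per-fiber total mass
  have fiberTot : ∀ j ∈ Finset.Icc 1 J, ∀ x,
      ∑ y ∈ C (j-1) x, μ j y = ((C (j-1) x).card : ℝ) * μ (j-1) x := by
    intro j hj x
    have hjJ : j ≤ J := (Finset.mem_Icc.1 hj).2
    have hNpos : (0:ℝ) < ((C (j-1) x).card : ℝ) := hCpos _ x
    have hKN := hαK j hj x
    have hterm : ∀ y ∈ C (j-1) x, μ j y =
        if α j x < 1/2 then μ (j-1) x * (if y ∈ B j then 0 else 1) / (1 - α j x)
        else μ (j-1) x * (α j x - if y ∈ B j then 1/2 else 0) / (α j x * (1 - 1/2)) := by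
      intro y hy
      have hEy : E (j-1) x y := (hCmem _ x y).1 hy
      rw [hμ j hj y, ← hαconst j hj x y hEy, ← hμconst (j-1) (by omega) x y hEy]
    rw [Finset.sum_congr rfl hterm,
      ← Finset.sum_filter_add_sum_filter_not (C (j-1) x) (fun y => y ∈ B j)]
    have hcard : (((C (j-1) x).filter (fun y => ¬ y ∈ B j)).card : ℝ)
        = ((C (j-1) x).card : ℝ)
          - (((C (j-1) x).filter (fun y => y ∈ B j)).card : ℝ) := by
      have h := Finset.card_filter_add_card_filter_not
        (s := C (j-1) x) (p := fun y => y ∈ B j)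
      push_cast [← h]
      ring
    by_cases hlt : α j x < 1/2
    · have h1 : (0:ℝ) < 1 - α j x := by linarith
      have e1 : ∑ y ∈ (C (j-1) x).filter (fun y => y ∈ B j),
          (if α j x < 1/2 then μ (j-1) x * (if y ∈ B j then 0 else 1) / (1 - α j x)
           else μ (j-1) x * (α j x - if y ∈ B j then 1/2 else 0) / (α j x * (1 - 1/2))) = 0 := by
        apply Finset.sum_eq_zero
        intro y hy
        rw [if_pos hlt, if_pos (Finset.mem_filter.1 hy).2]
        ring
      have e2 : ∑ y ∈ (C (j-1) x).filter (fun y => ¬ y ∈ B j),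
          (if α j x < 1/2 then μ (j-1) x * (if y ∈ B j then 0 else 1) / (1 - α j x)
           else μ (j-1) x * (α j x - if y ∈ B j then 1/2 else 0) / (α j x * (1 - 1/2)))
          = (((C (j-1) x).filter (fun y => ¬ y ∈ B j)).card : ℝ)
            * (μ (j-1) x / (1 - α j x)) := by
        rw [Finset.sum_congr rfl (fun y hy => ?_), Finset.sum_const, nsmul_eq_mul]
        rw [if_pos hlt, if_neg (Finset.mem_filter.1 hy).2]
        ring
      rw [e1, e2, hcard, ← hKN]
      field_simp
      ring
    · push_neg at hlt
      have hαpos : (0:ℝ) < α j x := by linarith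
      have e1 : ∑ y ∈ (C (j-1) x).filter (fun y => y ∈ B j),
          (if α j x < 1/2 then μ (j-1) x * (if y ∈ B j then 0 else 1) / (1 - α j x)
           else μ (j-1) x * (α j x - if y ∈ B j then 1/2 else 0) / (α j x * (1 - 1/2)))
          = (((C (j-1) x).filter (fun y => y ∈ B j)).card : ℝ)
            * (μ (j-1) x * (α j x - 1/2) / (α j x * (1 - 1/2))) := by
        rw [Finset.sum_congr rfl (fun y hy => ?_), Finset.sum_const, nsmul_eq_mul]
        rw [if_neg (not_lt.2 hlt), if_pos (Finset.mem_filter.1 hy).2]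
      have e2 : ∑ y ∈ (C (j-1) x).filter (fun y => ¬ y ∈ B j),
          (if α j x < 1/2 then μ (j-1) x * (if y ∈ B j then 0 else 1) / (1 - α j x)
           else μ (j-1) x * (α j x - if y ∈ B j then 1/2 else 0) / (α j x * (1 - 1/2)))
          = (((C (j-1) x).filter (fun y => ¬ y ∈ B j)).card : ℝ)
            * (μ (j-1) x * (α j x - 0) / (α j x * (1 - 1/2))) := by
        rw [Finset.sum_congr rfl (fun y hy => ?_), Finset.sum_const, nsmul_eq_mul]
        rw [if_neg (not_lt.2 hlt), if_neg (Finset.mem_filter.1 hy).2]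
      rw [e1, e2, hcard, ← hKN]
      rw [mul_div_assoc', mul_div_assoc', ← add_div,
        div_eq_iff (mul_pos hαpos (by norm_num)).ne']
      ring
  -- per-fiber mass on B j at step j
  have fiberB : ∀ j ∈ Finset.Icc 1 J, ∀ x,
      ∑ y ∈ C (j-1) x, (if y ∈ B j then μ j y else 0)
        ≤ ((C (j-1) x).card : ℝ) * (α j x ^ 2 * μ (j-1) x) := by
    intro j hj x
    have hjJ : j ≤ J := (Finset.mem_Icc.1 hj).2
    have hNpos : (0:ℝ) < ((C (j-1) x).card : ℝ) := hCpos _ x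
    have hKN := hαK j hj x
    have hμp : 0 ≤ μ (j-1) x := hμnn (j-1) (by omega) x
    have hterm : ∀ y ∈ C (j-1) x, (if y ∈ B j then μ j y else 0) =
        if y ∈ B j then
          (if α j x < 1/2 then μ (j-1) x * 0 / (1 - α j x)
           else μ (j-1) x * (α j x - 1/2) / (α j x * (1 - 1/2)))
        else 0 := by
      intro y hy
      have hEy : E (j-1) x y := (hCmem _ x y).1 hy
      by_cases hb : y ∈ B j
      · rw [if_pos hb, if_pos hb, hμ j hj y, ← hαconst j hj x y hEy,
          ← hμconst (j-1) (by omega) x y hEy]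
        by_cases hlt : α j x < 1/2
        · rw [if_pos hlt, if_pos hlt, if_pos hb]
        · rw [if_neg hlt, if_neg hlt, if_pos hb]
      · rw [if_neg hb, if_neg hb]
    rw [Finset.sum_congr rfl hterm, Finset.sum_ite, Finset.sum_const, Finset.sum_const,
      nsmul_eq_mul, nsmul_eq_mul]
    by_cases hlt : α j x < 1/2
    · rw [if_pos hlt]
      have hα0' := hα0 j hj x
      have e0 : μ (j-1) x * 0 / (1 - α j x) = 0 := by ring
      rw [e0, mul_zero, mul_zero, add_zero]
      exact mul_nonneg hNpos.le (mul_nonneg (by positivity) hμp)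
    · rw [if_neg hlt]
      push_neg at hlt
      have hαpos : (0:ℝ) < α j x := by linarith
      have hα1' := hα1 j hj x
      rw [mul_zero, add_zero, ← hKN]
      have h2 : α j x * ((C (j-1) x).card : ℝ)
          * (μ (j-1) x * (α j x - 1/2) / (α j x * (1 - 1/2)))
          = ((C (j-1) x).card : ℝ) * (μ (j-1) x * (2 * α j x - 1)) := by
        rw [mul_div_assoc', eq_comm, eq_div_iff (mul_pos hαpos (by norm_num)).ne']
        ring
      rw [h2]
      linarith [mul_nonneg (mul_nonneg hNpos.le hμp) (sq_nonneg (α j x - 1))]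
  -- mass transfer lemma
  have lemE : ∀ j ∈ Finset.Icc 1 J, ∀ h : X → ℝ,
      (∀ x y, E (j-1) x y → h x = h y) →
      (∑ x : X, h x * μ j x) = ∑ x : X, h x * μ (j-1) x := by
    intro j hj h hconst
    have hjJ : j ≤ J := (Finset.mem_Icc.1 hj).2
    rw [← lemD (j-1) (fun y => h y * μ j y), ← lemD (j-1) (fun y => h y * μ (j-1) y)]
    refine Finset.sum_congr rfl fun x _ => ?_
    congr 1
    have e1 : ∑ y ∈ C (j-1) x, h y * μ j y = h x * ∑ y ∈ C (j-1) x, μ j y := by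
      rw [Finset.mul_sum]
      exact Finset.sum_congr rfl fun y hy => by
        rw [hconst x y ((hCmem _ _ _).1 hy)]
    have e2 : ∑ y ∈ C (j-1) x, h y * μ (j-1) y
        = ((C (j-1) x).card : ℝ) * (h x * μ (j-1) x) := by
      rw [Finset.sum_congr rfl (fun y hy => ?_), Finset.sum_const, nsmul_eq_mul]
      rw [hconst x y ((hCmem _ _ _).1 hy),
        hμconst (j-1) (by omega) x y ((hCmem _ _ _).1 hy)]
    rw [e1, fiberTot j hj x, e2]
    ring
  -- mass of B j at step j
  have lemG : ∀ j ∈ Finset.Icc 1 J,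
      (∑ x : X, if x ∈ B j then μ j x else 0) ≤ ∑ x : X, α j x ^ 2 * μ (j-1) x := by
    intro j hj
    have hjJ : j ≤ J := (Finset.mem_Icc.1 hj).2
    rw [← lemD (j-1) (fun y => if y ∈ B j then μ j y else 0),
        ← lemD (j-1) (fun y => α j y ^ 2 * μ (j-1) y)]
    apply Finset.sum_le_sum
    intro x _
    rw [div_le_div_iff_of_pos_right (hCpos _ x)]
    calc ∑ y ∈ C (j-1) x, (if y ∈ B j then μ j y else 0)
        ≤ ((C (j-1) x).card : ℝ) * (α j x ^ 2 * μ (j-1) x) := fiberB j hj x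
      _ = ∑ y ∈ C (j-1) x, α j y ^ 2 * μ (j-1) y := by
          rw [Finset.sum_congr rfl (fun y hy => ?_), Finset.sum_const, nsmul_eq_mul]
          rw [← hαconst j hj x y ((hCmem _ _ _).1 hy),
            ← hμconst (j-1) (by omega) x y ((hCmem _ _ _).1 hy)]
  -- total mass is 1
  have htot : ∀ j, j ≤ J → ∑ x : X, μ j x = 1 := by
    intro j
    induction j with
    | zero =>
      intro _
      have hn : (Nat.card X : ℝ) ≠ 0 := by
        rw [Nat.card_eq_fintype_card]
        exact_mod_cast Fintype.card_pos.ne'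
      simp only [hμ0, Finset.sum_const, nsmul_eq_mul, Nat.card_eq_fintype_card] at *
      field_simp
      rw [Finset.card_univ]
    | succ j ih =>
      intro hj
      have hj1 : j + 1 ∈ Finset.Icc 1 J := by simp only [Finset.mem_Icc]; omega
      have := lemE (j+1) hj1 (fun _ => 1) (fun _ _ _ => rfl)
      simp only [one_mul, Nat.add_sub_cancel] at this
      rw [this, ih (by omega)]
  -- mass of B j is preserved afterwards
  have hBpres : ∀ j ∈ Finset.Icc 1 J, ∀ j', j ≤ j' → j' ≤ J →
      (∑ x : X, if x ∈ B j then μ j' x else 0) ≤ ∑ x : X, α j x ^ 2 * μ (j-1) x := by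
    intro j hj j'
    induction j' with
    | zero =>
      intro h0 _
      have : j = 0 := by omega
      have h1 : 1 ≤ j := (Finset.mem_Icc.1 hj).1
      omega
    | succ j' ih =>
      intro hjj hj'J
      by_cases heq : j = j' + 1
      · subst heq
        exact lemG _ hj
      · have hjj' : j ≤ j' := by omega
        have h1 : j' + 1 ∈ Finset.Icc 1 J := by simp only [Finset.mem_Icc]; omega
        have hconst : ∀ x y, E ((j'+1)-1) x y →
            (if x ∈ B j then (1:ℝ) else 0) = (if y ∈ B j then (1:ℝ) else 0) := by
          intro x y hE
          simp only [Nat.add_sub_cancel] at hE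
          have hE' : E j x y := hEmono j j' hjj' x y hE
          by_cases hb : x ∈ B j
          · rw [if_pos hb, if_pos (hBsat j hj x y hb hE')]
          · rw [if_neg hb, if_neg (fun hy => hb (hBsat j hj y x hy (hEsymm _ _ _ hE')))]
        have e := lemE (j'+1) h1 (fun x => if x ∈ B j then (1:ℝ) else 0) hconst
        simp only [Nat.add_sub_cancel] at e
        have rewr : ∀ (k : ℕ) (x : X),
            (if x ∈ B j then μ k x else 0) = (if x ∈ B j then (1:ℝ) else 0) * μ k x := by
          intro k x
          by_cases hb : x ∈ B j <;> simp [hb]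
        calc (∑ x : X, if x ∈ B j then μ (j'+1) x else 0)
            = ∑ x : X, (if x ∈ B j then (1:ℝ) else 0) * μ (j'+1) x :=
              Finset.sum_congr rfl fun x _ => rewr _ x
          _ = ∑ x : X, (if x ∈ B j then (1:ℝ) else 0) * μ j' x := e
          _ = ∑ x : X, if x ∈ B j then μ j' x else 0 :=
              (Finset.sum_congr rfl fun x _ => (rewr _ x).symm)
          _ ≤ _ := ih hjj' (by omega)
  -- conclusion
  by_contra hcon
  push_neg at hcon
  have key : ∀ x : X, μ J x ≤ ∑ j ∈ Finset.Icc 1 J, (if x ∈ B j then μ J x else 0) := by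
    intro x
    obtain ⟨j0, hj0, hx⟩ := hcon x
    have hnn : ∀ j ∈ Finset.Icc 1 J, 0 ≤ (if x ∈ B j then μ J x else 0) := by
      intro j _
      by_cases hb : x ∈ B j <;> simp [hb, hμnn J le_rfl x]
    have hle := Finset.single_le_sum hnn hj0
    rw [if_pos hx] at hle
    exact hle
  have h1 : (1:ℝ) ≤ ∑ j ∈ Finset.Icc 1 J, ∑ x : X, (if x ∈ B j then μ J x else 0) := by
    calc (1:ℝ) = ∑ x : X, μ J x := (htot J le_rfl).symm
      _ ≤ ∑ x : X, ∑ j ∈ Finset.Icc 1 J, (if x ∈ B j then μ J x else 0) :=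
          Finset.sum_le_sum fun x _ => key x
      _ = ∑ j ∈ Finset.Icc 1 J, ∑ x : X, (if x ∈ B j then μ J x else 0) :=
          Finset.sum_comm
  have h2 : ∑ j ∈ Finset.Icc 1 J, ∑ x : X, (if x ∈ B j then μ J x else 0)
      ≤ ∑ j ∈ Finset.Icc 1 J, ∑ x : X, α j x ^ 2 * μ (j-1) x :=
    Finset.sum_le_sum fun j hj => hBpres j hj J (Finset.mem_Icc.1 hj).2 le_rfl
  linarith

/-- **The distortion method with δ_j = 1/2.**
If `∑_{j=1}^J M_j^{(2)} < 1`, then the collection `A` does not cover `R`. -/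
theorem stmt6
    -- R is a Dedekind domain (not a field) with all nontrivial quotients finite
    (R : Type*) [CommRing R] [IsDedekindDomain R] (hnotfield : ¬ IsField R)
    (hfin : ∀ I : Ideal R, I ≠ ⊥ → Finite (R ⧸ I))
    -- the collection A = {a i + I i}
    (m : ℕ) (a : Fin m → R) (I : Fin m → Ideal R)
    (hIbot : ∀ i, I i ≠ ⊥) (hItop : ∀ i, I i ≠ ⊤)
    -- Q = I_1 ∩ ⋯ ∩ I_m with prime factorization P_1^{ν_1} ⋯ P_J^{ν_J},
    -- |P_1| ≤ ⋯ ≤ |P_J|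
    (Q : Ideal R) (hQ : Q = ⨅ i, I i)
    (J : ℕ) (P : ℕ → Ideal R) (ν : ℕ → ℕ)
    (hPprime : ∀ j ∈ Finset.Icc 1 J, (P j).IsPrime ∧ P j ≠ ⊥)
    (hν : ∀ j ∈ Finset.Icc 1 J, 1 ≤ ν j)
    (hPinj : ∀ j ∈ Finset.Icc 1 J, ∀ k ∈ Finset.Icc 1 J, P j = P k → j = k)
    (hPord : ∀ j ∈ Finset.Icc 1 J, ∀ k ∈ Finset.Icc 1 J, j ≤ k →
      Nat.card (R ⧸ P j) ≤ Nat.card (R ⧸ P k))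
    (hfact : Q = ∏ j ∈ Finset.Icc 1 J, P j ^ ν j)
    -- the partial products Q_j (so Q_0 = R)
    (Qp : ℕ → Ideal R) (hQp : ∀ j ≤ J, Qp j = ∏ i ∈ Finset.Icc 1 j, P i ^ ν i)
    -- the sets B_j ⊆ R/Q
    (B : ℕ → Set (R ⧸ Q))
    (hB : ∀ j ∈ Finset.Icc 1 J, B j =
      ⋃ i ∈ {i : Fin m | I i ∣ Qp j ∧ ¬ I i ∣ Qp (j - 1)},
        Ideal.Quotient.mk Q '' {r : R | r - a i ∈ I i})
    -- the fibres F_j(ā) of the projections π_j : R/Q → R/Q_j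
    (Fib : ℕ → (R ⧸ Q) → Set (R ⧸ Q))
    (hFib : ∀ j ≤ J, ∀ x, Fib j x =
      {y : R ⧸ Q | y - x ∈ Ideal.map (Ideal.Quotient.mk Q) (Qp j)})
    -- α_j(ā) = #(F_{j-1}(ā) ∩ B_j) / #F_{j-1}(ā)
    (α : ℕ → (R ⧸ Q) → ℝ)
    (hα : ∀ j ∈ Finset.Icc 1 J, ∀ x, α j x =
      (Nat.card ↥(Fib (j - 1) x ∩ B j) : ℝ) / (Nat.card ↥(Fib (j - 1) x) : ℝ))
    -- take δ_j = 1/2 for all 1 ≤ j ≤ J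
    (δ : ℕ → ℝ) (hδ : ∀ j ∈ Finset.Icc 1 J, δ j = 1 / 2)
    -- the distorted measures P_0, …, P_J
    (μ : ℕ → (R ⧸ Q) → ℝ)
    (hμ0 : ∀ x, μ 0 x = 1 / (Nat.card (R ⧸ Q) : ℝ))
    (hμ : ∀ j ∈ Finset.Icc 1 J, ∀ x, μ j x =
      if α j x < δ j then
        μ (j - 1) x * (if x ∈ B j then 0 else 1) / (1 - α j x)
      else
        μ (j - 1) x * (α j x - if x ∈ B j then δ j else 0) / (α j x * (1 - δ j)))
    -- the moments M_j^{(k)}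
    (M : ℕ → ℕ → ℝ)
    (hM : ∀ k j, M k j = ∑ᶠ x : R ⧸ Q, α j x ^ k * μ (j - 1) x)
    -- the hypothesis ∑_{j=1}^J M_j^{(2)} < 1
    (hsum : ∑ j ∈ Finset.Icc 1 J, M 2 j < 1) :
    (⋃ i, {r : R | r - a i ∈ I i}) ≠ Set.univ := by
  classical
  intro hcov
  have hQbot : Q ≠ ⊥ := by
    rw [hfact, ← Ideal.zero_eq_bot, Ne, Finset.prod_eq_zero_iff]
    rintro ⟨j, hj, hzero⟩
    exact (hPprime j hj).2 (by
      rw [← Ideal.zero_eq_bot]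
      exact pow_eq_zero_iff (by have := hν j hj; omega) |>.1 hzero)
  haveI : Finite (R ⧸ Q) := hfin Q hQbot
  haveI : Fintype (R ⧸ Q) := Fintype.ofFinite _
  have hQpJ : Qp J = Q := by rw [hQp J le_rfl, hfact]
  have h01 : ∀ n : ℕ, Finset.Icc 1 n = Finset.Ioc 0 n := fun n => by rw [← Finset.Icc_add_one_left_eq_Ioc, zero_add]
  have hQple : ∀ j k : ℕ, j ≤ k → k ≤ J → Qp k ≤ Qp j := by
    intro j k hjk hkJ
    rw [hQp j (hjk.trans hkJ), hQp k hkJ, h01 j, h01 k,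
      ← Finset.prod_Ioc_consecutive _ (Nat.zero_le j) hjk]
    exact Ideal.mul_le_left
  have hQle : ∀ j ≤ J, Q ≤ Qp j := by
    intro j hj
    rw [← hQpJ]
    exact hQple j J hj le_rfl
  set E : ℕ → (R ⧸ Q) → (R ⧸ Q) → Prop :=
    fun j x y => y - x ∈ Ideal.map (Ideal.Quotient.mk Q) (Qp (min j J)) with hE
  have hErefl : ∀ j x, E j x x := by
    intro j x
    show x - x ∈ _
    rw [sub_self]
    exact zero_mem _
  have hEsymm : ∀ j x y, E j x y → E j y x := by
    intro j x y h
    show x - y ∈ _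
    simpa [neg_sub] using neg_mem h
  have hEtrans : ∀ j x y z, E j x y → E j y z → E j x z := by
    intro j x y z h1 h2
    show z - x ∈ _
    simpa [sub_add_sub_cancel] using add_mem h2 h1
  have hEmono : ∀ k l, k ≤ l → ∀ x y, E l x y → E k x y := by
    intro k l hkl x y h
    exact Ideal.map_mono (hQple (min k J) (min l J) (by omega) (min_le_right l J)) h
  have hmem : ∀ j ≤ J, ∀ r s : R,
      ((Ideal.Quotient.mk Q) s - (Ideal.Quotient.mk Q) r
        ∈ Ideal.map (Ideal.Quotient.mk Q) (Qp j)) ↔ s - r ∈ Qp j := by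
    intro j hj r s
    rw [← map_sub, Ideal.mem_quotient_iff_mem (hQle j hj)]
  have hBsat : ∀ j ∈ Finset.Icc 1 J, ∀ x y, x ∈ B j → E j x y → y ∈ B j := by
    intro j hj x y hx hxy
    obtain ⟨hj1, hjJ⟩ := Finset.mem_Icc.1 hj
    rw [hB j hj] at hx ⊢
    simp only [Set.mem_iUnion, Set.mem_setOf_eq] at hx ⊢
    obtain ⟨i, hi, r, hr, hrx⟩ := hx
    obtain ⟨s, rfl⟩ := Ideal.Quotient.mk_surjective y
    have hEj : (Ideal.Quotient.mk Q) s - (Ideal.Quotient.mk Q) r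
        ∈ Ideal.map (Ideal.Quotient.mk Q) (Qp j) := by
      have h' := hxy
      rw [hE] at h'
      rw [hrx]
      simpa [min_eq_left hjJ] using h'
    have hsr : s - r ∈ Qp j := (hmem j hjJ r s).1 hEj
    refine ⟨i, hi, s, ?_, rfl⟩
    have hQpI : Qp j ≤ I i := Ideal.dvd_iff_le.1 hi.1
    have hrw : s - a i = (s - r) + (r - a i) := by ring
    show s - a i ∈ I i
    rw [hrw]
    exact add_mem (hQpI hsr) hr
  have hα' : ∀ j ∈ Finset.Icc 1 J, ∀ x, α j x =
      (Nat.card ↥({y | E (j-1) x y} ∩ B j) : ℝ) / (Nat.card ↥{y | E (j-1) x y} : ℝ) := by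
    intro j hj x
    obtain ⟨hj1, hjJ⟩ := Finset.mem_Icc.1 hj
    have hset : {y | E (j-1) x y} = Fib (j-1) x := by
      rw [hFib (j-1) (by omega) x]
      ext y
      simp only [Set.mem_setOf_eq, hE, min_eq_left (show j-1 ≤ J by omega)]
    rw [hα j hj x, hset]
  have hμ' : ∀ j ∈ Finset.Icc 1 J, ∀ x, μ j x =
      if α j x < 1/2 then μ (j - 1) x * (if x ∈ B j then 0 else 1) / (1 - α j x)
      else μ (j - 1) x * (α j x - if x ∈ B j then 1/2 else 0) / (α j x * (1 - 1/2)) := by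
    intro j hj x
    rw [hμ j hj x, hδ j hj]
  have hsum' : ∑ j ∈ Finset.Icc 1 J, ∑ x : R ⧸ Q, α j x ^ 2 * μ (j-1) x < 1 := by
    refine lt_of_le_of_lt (le_of_eq ?_) hsum
    refine Finset.sum_congr rfl fun j _ => ?_
    rw [hM 2 j, finsum_eq_sum_of_fintype]
  obtain ⟨x, hx⟩ := core J E B α μ hErefl hEsymm hEtrans hEmono hBsat hα' hμ0 hμ' hsum'
  obtain ⟨r, rfl⟩ := Ideal.Quotient.mk_surjective x
  have hrmem : r ∈ ⋃ i, {r : R | r - a i ∈ I i} := hcov ▸ Set.mem_univ r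
  obtain ⟨i, hri⟩ := Set.mem_iUnion.1 hrmem
  have hpJ : I i ∣ Qp J := by
    rw [hQpJ, Ideal.dvd_iff_le, hQ]
    exact iInf_le I i
  have hp0 : ¬ I i ∣ Qp 0 := by
    rw [hQp 0 (Nat.zero_le J), show Finset.Icc 1 0 = (∅ : Finset ℕ) from rfl,
      Finset.prod_empty]
    intro hdvd
    exact hItop i (top_le_iff.1 (by simpa [Ideal.one_eq_top] using Ideal.dvd_iff_le.1 hdvd))
  have hex : ∃ j, I i ∣ Qp j := ⟨J, hpJ⟩
  have hj0 : I i ∣ Qp (Nat.find hex) := Nat.find_spec hex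
  have hj0J : Nat.find hex ≤ J := Nat.find_min' hex hpJ
  have hj0pos : 1 ≤ Nat.find hex := by
    rcases Nat.eq_zero_or_pos (Nat.find hex) with h | h
    · rw [h] at hj0
      exact absurd hj0 hp0
    · exact h
  have hj0prev : ¬ I i ∣ Qp (Nat.find hex - 1) := Nat.find_min hex (by omega)
  have hmemB : (Ideal.Quotient.mk Q r) ∈ B (Nat.find hex) := by
    rw [hB (Nat.find hex) (Finset.mem_Icc.2 ⟨hj0pos, hj0J⟩)]
    exact Set.mem_iUnion₂.2 ⟨i, ⟨hj0, hj0prev⟩, ⟨r, hri, rfl⟩⟩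
  exact hx (Nat.find hex) (Finset.mem_Icc.2 ⟨hj0pos, hj0J⟩) hmemB
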